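/- Let P₀, P₁, …, P_m be a symmetric Clifford system on ℝ^{2l} (with l ≥ 1) and let F(x) = |x|⁴ − 2∑_{i=0}^{m} ⟨P_i x, x⟩² be the associated FKM polynomial. Then F satisfies the first Cartan–Münzner equation for g = 4: for every x ∈ ℝ^{2l}, |∇F(x)|² = 16|x|⁶, where ∇F denotes the Euclidean gradient of F. -/

import Mathlib

open RealInnerProductSpace

/-- The FKM polynomial of a symmetric Clifford system satisfies the first
Cartan–Münzner equation for `g = 4`: `|∇F(x)|² = 16 |x|⁶`. -/
theorem fkm_first_cartan_munzner {l m : ℕ} (hl : 1 ≤ l)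
    (P : Fin (m + 1) →
      (EuclideanSpace ℝ (Fin (2 * l)) →ₗ[ℝ] EuclideanSpace ℝ (Fin (2 * l))))
    (hsymm : ∀ i, (P i).IsSymmetric)
    (hcliff : ∀ i j, P i ∘ₗ P j + P j ∘ₗ P i =
      if i = j then (2 : ℝ) • (LinearMap.id :
        EuclideanSpace ℝ (Fin (2 * l)) →ₗ[ℝ] EuclideanSpace ℝ (Fin (2 * l))) else 0)
    (F : EuclideanSpace ℝ (Fin (2 * l)) → ℝ)
    (hF : ∀ x, F x = ‖x‖ ^ 4 - 2 * ∑ i, ⟪P i x, x⟫ ^ 2) :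
    ∀ x, ‖gradient F x‖ ^ 2 = 16 * ‖x‖ ^ 6 := by
  classical
  set Q : Fin (m + 1) → EuclideanSpace ℝ (Fin (2 * l)) →L[ℝ] EuclideanSpace ℝ (Fin (2 * l)) :=
    fun i => LinearMap.toContinuousLinearMap (P i) with hQ
  have hQapp : ∀ i (y : EuclideanSpace ℝ (Fin (2 * l))), Q i y = P i y := fun i y => rfl
  intro x
  -- key Clifford identity on inner products
  have hPP : ∀ i j, ⟪P i x, P j x⟫ = if i = j then ‖x‖ ^ 2 else 0 := by
    intro i j
    have h := congrArg (fun T : EuclideanSpace ℝ (Fin (2 * l)) →ₗ[ℝ]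
        EuclideanSpace ℝ (Fin (2 * l)) => ⟪T x, x⟫) (hcliff i j)
    simp only [LinearMap.add_apply, LinearMap.comp_apply, inner_add_left] at h
    have h1 : ⟪P i (P j x), x⟫ = ⟪P i x, P j x⟫ :=
      (hsymm i (P j x) x).trans (real_inner_comm _ _)
    have h2 : ⟪P j (P i x), x⟫ = ⟪P i x, P j x⟫ := hsymm j (P i x) x
    rw [h1, h2] at h
    by_cases hij : i = j
    · simp only [hij, if_true] at h ⊢
      simp only [LinearMap.smul_apply, LinearMap.id_apply, inner_smul_left,
        RCLike.conj_to_real, real_inner_self_eq_norm_sq] at h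
      rw [real_inner_self_eq_norm_sq]
      linarith
    · simp only [hij, if_false] at h ⊢
      simp only [LinearMap.zero_apply, inner_zero_left] at h
      linarith
  have hsy : ∀ i (y : EuclideanSpace ℝ (Fin (2 * l))), ⟪P i y, x⟫ = ⟪P i x, y⟫ :=
    fun i y => (hsymm i y x).trans (real_inner_comm _ _)
  -- the gradient
  set S : EuclideanSpace ℝ (Fin (2 * l)) := ∑ i, ⟪P i x, x⟫ • (P i x) with hS
  set g : EuclideanSpace ℝ (Fin (2 * l)) :=
    (4 * ‖x‖ ^ 2) • x - (8 : ℝ) • S with hg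
  have hgrad : HasGradientAt F g x := by
    rw [hasGradientAt_iff_hasFDerivAt]
    have hid : HasFDerivAt (fun y : EuclideanSpace ℝ (Fin (2 * l))  => y)
        (ContinuousLinearMap.id ℝ (EuclideanSpace ℝ (Fin (2 * l)))) x := hasFDerivAt_id x
    have h0 := hid.inner ℝ hid
    have h0sq := h0.mul h0
    have hi := fun i => ((Q i).hasFDerivAt.inner ℝ hid).mul ((Q i).hasFDerivAt.inner ℝ hid)
    have hsum := HasFDerivAt.sum (u := Finset.univ) (fun i _ => hi i)
    have hsum2 := hsum.const_mul (2 : ℝ)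
    have htot := h0sq.sub hsum2
    have hFeq : F = fun y : EuclideanSpace ℝ (Fin (2 * l)) => ⟪y, y⟫ * ⟪y, y⟫ -
        2 * ∑ i, ⟪Q i y, y⟫ * ⟪Q i y, y⟫ := by
      funext y
      rw [hF y]
      have h4 : ‖y‖ ^ 4 = ⟪y, y⟫ * ⟪y, y⟫ := by
        rw [real_inner_self_eq_norm_sq]; ring
      rw [h4]
      congr 1
      congr 1
      exact Finset.sum_congr rfl fun i _ => by rw [hQapp, sq]
    rw [hFeq]
    refine HasFDerivAt.congr_fderiv (htot.congr_of_eventuallyEq (Filter.Eventually.of_forall fun y => ?_)) ?_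
    · simp only [Pi.sub_apply, Pi.mul_apply, Finset.sum_apply]
    ext y
    -- evaluate both continuous linear maps at y
    simp only [ContinuousLinearMap.coe_sub', Pi.sub_apply, ContinuousLinearMap.add_apply,
      ContinuousLinearMap.coe_smul', Pi.smul_apply, ContinuousLinearMap.comp_apply,
      ContinuousLinearMap.prod_apply, ContinuousLinearMap.coe_id', id_eq,
      fderivInnerCLM_apply, ContinuousLinearMap.smul_apply, ContinuousLinearMap.coe_sum',
      Finset.sum_apply, smul_eq_mul, hQapp, hsy]
    have hgy : (InnerProductSpace.toDual ℝ (EuclideanSpace ℝ (Fin (2 * l)))) g y = ⟪g, y⟫ :=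
      InnerProductSpace.toDual_apply_apply
    rw [hgy, hg, hS, inner_sub_left, real_inner_smul_left, real_inner_smul_left, sum_inner]
    simp only [real_inner_smul_left]
    rw [real_inner_self_eq_norm_sq]
    simp only [real_inner_comm y x, Finset.mul_sum]
    rw [sub_eq_sub_iff_sub_eq_sub, ← Finset.sum_sub_distrib,
      Finset.sum_eq_zero (fun i _ => by ring)]
    ring
  rw [show gradient F x = g from hgrad.gradient]
  -- now compute the norm of g
  rw [← real_inner_self_eq_norm_sq, hg]
  have hxS : ⟪x, S⟫ = ∑ i, ⟪P i x, x⟫ ^ 2 := by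
    rw [hS, inner_sum]
    refine Finset.sum_congr rfl fun i _ => ?_
    rw [real_inner_smul_right, real_inner_comm, sq]
  have hSS : ⟪S, S⟫ = (∑ i, ⟪P i x, x⟫ ^ 2) * ‖x‖ ^ 2 := by
    rw [hS, sum_inner, Finset.sum_mul]
    refine Finset.sum_congr rfl fun i _ => ?_
    simp only [inner_sum, real_inner_smul_left, real_inner_smul_right, hPP,
      mul_ite, mul_zero, Finset.sum_ite_eq, Finset.sum_ite_eq', Finset.mem_univ, if_true]
    ring
  simp only [inner_sub_left, inner_sub_right, real_inner_smul_left, real_inner_smul_right]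
  have hSx : ⟪S, x⟫ = ∑ i, ⟪P i x, x⟫ ^ 2 := by
    rw [real_inner_comm]; exact hxS
  linear_combination (16 * ‖x‖ ^ 4 : ℝ) * (real_inner_self_eq_norm_sq x)
    - (32 * ‖x‖ ^ 2 : ℝ) * hSx - (32 * ‖x‖ ^ 2 : ℝ) * hxS + 64 * hSS
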